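/- For distinct primes p and q, and integers 0 ≤ i < p, 0 ≤ j < q, if k and l are the unique integers with 0 ≤ k < p, 0 ≤ l < q and i·q + j = l·p + k, then the 2×2 rational matrices [[1/p, i/p],[0,1]]·[[1/q, j/q],[0,1]] and [[1/q, l/q],[0,1]]·[[1/p, k/p],[0,1]] are equal. -/

import Mathlib

/-- Meta-commutation lemma for Conway's big picture edge operators:
if `i·q + j = l·p + k` with `0 ≤ k < p`, `0 ≤ l < q`, then
`P_i · Q_j = Q_l · P_k` as matrices over `ℚ`, where
`P_i = [[1/p, i/p],[0,1]]` and `Q_j = [[1/q, j/q],[0,1]]`. -/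
theorem meta_commutation_matrices (p q : ℕ) (hp : p.Prime) (hq : q.Prime) (hpq : p ≠ q)
    (i j k l : ℕ) (hi : i < p) (hj : j < q) (hk : k < p) (hl : l < q)
    (h : i * q + j = l * p + k) :
    (!![1 / (p : ℚ), (i : ℚ) / p; 0, 1] * !![1 / (q : ℚ), (j : ℚ) / q; 0, 1]) =
      (!![1 / (q : ℚ), (l : ℚ) / q; 0, 1] * !![1 / (p : ℚ), (k : ℚ) / p; 0, 1]) := by
  have hp0 : (p : ℚ) ≠ 0 := Nat.cast_ne_zero.mpr hp.ne_zero
  have hq0 : (q : ℚ) ≠ 0 := Nat.cast_ne_zero.mpr hq.ne_zero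
  have h' : (i : ℚ) * q + j = l * p + k := by exact_mod_cast congrArg (Nat.cast : ℕ → ℚ) h
  ext a b
  fin_cases a <;> fin_cases b <;>
    simp [Matrix.mul_apply, Fin.sum_univ_two] <;> field_simp <;>
    (first
      | linear_combination ((p:ℚ)^2*(q:ℚ)^2)*h'
      | linear_combination h'
      | ring)
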